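/- Let S and A be finite nonempty sets, γ ∈ (0,1), h : S → ℝ, T : S × A → S, and T̂ : S × A → Finset S with T(s,a) ∈ T̂(s,a) for all (s,a). Let Q* be the unique fixed point of B(Q)(s,a) = (1-γ)h(s) + γ·max(h(s), min_{a'} Q(T(s,a), a')) and let Q̄* be the unique fixed point of B̄(Q)(s,a) = (1-γ)h(s) + γ·max(h(s), max_{s' ∈ T̂(s,a)} min_{a'} Q(s', a')). Then Q̄*(s,a) ≥ Q*(s,a) for all (s,a). -/
import Mathlib


theorem stmt_4 {S A : Type} [Fintype S] [Fintype A] [Nonempty S] [Nonempty A]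
    (γ : ℝ) (hγ : γ ∈ Set.Ioo (0 : ℝ) 1) (h : S → ℝ)
    (T : S × A → S) (That : S × A → Finset S) (hT : ∀ p, T p ∈ That p)
    (hTne : ∀ p, (That p).Nonempty)
    (Qstar Qbar : S × A → ℝ)
    (hQstar : ∀ p, Qstar p = (1 - γ) * h p.1 + γ * max (h p.1)
      (Finset.univ.inf' Finset.univ_nonempty (fun a' : A => Qstar (T p, a'))))
    (hQbar : ∀ p, Qbar p = (1 - γ) * h p.1 + γ * max (h p.1)
      ((That p).sup' (hTne p) (fun s' =>
        Finset.univ.inf' Finset.univ_nonempty (fun a' : A => Qbar (s', a'))))) :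
    ∀ p, Qstar p ≤ Qbar p := by
  obtain ⟨hγ0, hγ1⟩ := hγ
  set D : S × A → ℝ := fun p => Qstar p - Qbar p with hD
  set M : ℝ := Finset.univ.sup' Finset.univ_nonempty D with hM
  have hDM : ∀ p, D p ≤ M := fun p =>
    Finset.le_sup' D (Finset.mem_univ p)
  have key : ∀ p, D p ≤ γ * max 0 M := by
    intro p
    have h1 : Finset.univ.inf' Finset.univ_nonempty (fun a' : A => Qstar (T p, a'))
        ≤ Finset.univ.inf' Finset.univ_nonempty (fun a' : A => Qbar (T p, a')) + M := by
      obtain ⟨a, -, ha⟩ := Finset.exists_mem_eq_inf' (Finset.univ_nonempty)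
        (fun a' : A => Qbar (T p, a'))
      calc Finset.univ.inf' Finset.univ_nonempty (fun a' : A => Qstar (T p, a'))
          ≤ Qstar (T p, a) := Finset.inf'_le _ (Finset.mem_univ a)
        _ ≤ Qbar (T p, a) + M := by have := hDM (T p, a); simp only [hD] at this; linarith
        _ = _ + M := by rw [ha]
    have h2 : Finset.univ.inf' Finset.univ_nonempty (fun a' : A => Qbar (T p, a'))
        ≤ (That p).sup' (hTne p) (fun s' =>
          Finset.univ.inf' Finset.univ_nonempty (fun a' : A => Qbar (s', a'))) :=
      Finset.le_sup' (fun s' => Finset.univ.inf' Finset.univ_nonempty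
        (fun a' : A => Qbar (s', a'))) (hT p)
    have h3 : max (h p.1) (Finset.univ.inf' Finset.univ_nonempty (fun a' : A => Qstar (T p, a')))
        ≤ max (h p.1) ((That p).sup' (hTne p) (fun s' =>
          Finset.univ.inf' Finset.univ_nonempty (fun a' : A => Qbar (s', a')))) + max 0 M := by
      have hM0 : (0:ℝ) ≤ max 0 M := le_max_left _ _
      have hMM : M ≤ max 0 M := le_max_right _ _
      rcases le_total (Finset.univ.inf' Finset.univ_nonempty (fun a' : A => Qstar (T p, a'))) (h p.1) with hc | hc
      · simp only [max_eq_left hc]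
        calc h p.1 ≤ max (h p.1) _ := le_max_left _ _
          _ ≤ _ + max 0 M := by linarith [le_max_left (h p.1) ((That p).sup' (hTne p) (fun s' =>
              Finset.univ.inf' Finset.univ_nonempty (fun a' : A => Qbar (s', a'))))]
      · calc max (h p.1) (Finset.univ.inf' Finset.univ_nonempty (fun a' : A => Qstar (T p, a')))
            ≤ Finset.univ.inf' Finset.univ_nonempty (fun a' : A => Qbar (T p, a')) + max 0 M := by
              rw [max_eq_right hc]; linarith
          _ ≤ _ + max 0 M := by
              have := le_trans h2 (le_max_right (h p.1) _)
              linarith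
    have e1 := hQstar p
    have e2 := hQbar p
    have : Qstar p - Qbar p ≤ γ * max 0 M := by
      rw [e1, e2]
      have := mul_le_mul_of_nonneg_left h3 (le_of_lt hγ0)
      ring_nf
      nlinarith
    simpa [hD] using this
  have hMle : M ≤ γ * max 0 M := by
    rw [hM, Finset.sup'_le_iff]
    intro p _
    exact key p
  have hM0 : M ≤ 0 := by
    rcases le_or_gt M 0 with hc | hc
    · exact hc
    · exfalso
      have : max 0 M = M := max_eq_right hc.le
      rw [this] at hMle
      nlinarith
  intro p
  have := hDM p
  simp [hD] at this
  linarith
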